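/- For a non-crossing partition π of {1,...,j}, define σ_π ∈ S(j) by letting σ_π(i) be the next element after i in the same block as i with respect to the cyclic order (1,2,...,j). Then σ_π is a permutation whose orbits are exactly the blocks of π, and σ_π lies in the interval [id, (1 2 ... j)] of the absolute order on S(j). -/

import Mathlib

/-- The minimal number of transpositions needed to write `σ` as a product of
transpositions (`0` for the identity). -/
noncomputable def transLength {n : ℕ} (σ : Equiv.Perm (Fin n)) : ℕ :=
  sInf {h | ∃ L : List (Equiv.Perm (Fin n)), L.length = h ∧ (∀ x ∈ L, x.IsSwap) ∧ L.prod = σ}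

/-- The setoid on `Fin n` whose classes are the orbits (cycles, including fixed
points) of the permutation `τ`. -/
def cycleSetoid {n : ℕ} (τ : Equiv.Perm (Fin n)) : Setoid (Fin n) :=
  ⟨τ.SameCycle, ⟨fun x => Equiv.Perm.SameCycle.refl τ x, fun h => h.symm, fun h h' => h.trans h'⟩⟩

/-- The number of orbits of `{1,…,n}` under `τ` (fixed points count as cycles). -/
noncomputable def cycleCount {n : ℕ} (τ : Equiv.Perm (Fin n)) : ℕ :=
  Nat.card (Quotient (cycleSetoid τ))

/-- The absolute order on the symmetric group: `σ ≤ σ'` iff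
`l(σ') = l(σ) + l(σ⁻¹σ')` where `l` is the transposition length. -/
noncomputable def absLe {n : ℕ} (σ σ' : Equiv.Perm (Fin n)) : Prop :=
  transLength σ' = transLength σ + transLength (σ⁻¹ * σ')

/-- A partition (setoid) of `Fin j` is non-crossing if there are no
`a < b < c < d` with `a,c` in one block and `b,d` in a different block. -/
def NonCrossing {j : ℕ} (π : Setoid (Fin j)) : Prop :=
  ¬ ∃ a b c d : Fin j, a < b ∧ b < c ∧ c < d ∧ π.r a c ∧ π.r b d ∧ ¬ π.r a b

open Fin.NatCast in
/-- For a partition `π` of `Fin j`, `nextElem π i` is the next element after `i`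
in the same block as `i`, for the cyclic order `(1,2,…,j)`. -/
noncomputable def nextElem {j : ℕ} [NeZero j] (π : Setoid (Fin j)) (i : Fin j) : Fin j :=
  i + ((sInf {t : ℕ | 0 < t ∧ π.r i (i + (t : Fin j))} : ℕ) : Fin j)

open Equiv Equiv.Perm
open Fin.NatCast Fin.CommRing

section General
variable {n : ℕ}

lemma card_add_one_le_of_surj {α β : Type*} [Finite α] (f : α → β) (hf : Function.Surjective f)
    {a₁ a₂ : α} (hne : a₁ ≠ a₂) (heq : f a₁ = f a₂) : Nat.card β + 1 ≤ Nat.card α := by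
  classical
  haveI : Nonempty α := ⟨a₁⟩
  haveI : Finite β := Finite.of_surjective f hf
  set g := Function.surjInv hf with hg
  have hfg : ∀ b, f (g b) = b := fun b => Function.rightInverse_surjInv hf b
  set m : α := if g (f a₁) = a₁ then a₂ else a₁ with hm
  have hmiss : ∀ b, g b ≠ m := by
    intro b hb
    by_cases h1 : g (f a₁) = a₁
    · have hm2 : m = a₂ := hm.trans (if_pos h1)
      have hb2 : b = f a₂ := by rw [← hfg b, hb, hm2]
      have : g (f a₁) = a₂ := by rw [heq, ← hb2, hb, hm2]
      exact hne (h1 ▸ this)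
    · have hm1 : m = a₁ := hm.trans (if_neg h1)
      have hb2 : b = f a₁ := by rw [← hfg b, hb, hm1]
      exact h1 (by rw [← hb2, hb, hm1])
  have hinj : Function.Injective (fun x : β ⊕ Unit => Sum.elim g (fun _ => m) x) := by
    rintro (b | u) (b' | u') h <;> simp only [Sum.elim_inl, Sum.elim_inr] at h
    · have := congrArg f h; rw [hfg, hfg] at this; rw [this]
    · exact absurd h (hmiss b)
    · exact absurd h.symm (hmiss b')
    · rfl
  have := Nat.card_le_card_of_injective _ hinj
  simpa [Nat.card_sum] using this

lemma sameCycle_nat_pow {τ : Perm (Fin n)} {x y : Fin n} (h : τ.SameCycle x y) :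
    ∃ k : ℕ, (τ ^ k) x = y := by
  obtain ⟨i, _, hi⟩ := h.exists_pow_eq'
  exact ⟨i, hi⟩

lemma sameCycle_mem_of_invariant {τ : Perm (Fin n)} {S : Set (Fin n)}
    (hS : ∀ x ∈ S, τ x ∈ S) {x y : Fin n} (hx : x ∈ S) (h : τ.SameCycle x y) : y ∈ S := by
  obtain ⟨k, rfl⟩ := sameCycle_nat_pow h
  clear h
  induction k with
  | zero => simpa using hx
  | succ k ih => rw [pow_succ', Perm.mul_apply]; exact hS _ ih

lemma cc_one : cycleCount (1 : Perm (Fin n)) = n := by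
  have he : Quotient (cycleSetoid (1 : Perm (Fin n))) ≃ Fin n := by
    refine Equiv.ofBijective (Quotient.lift id ?_) ⟨?_, ?_⟩
    · intro a b hab
      exact (Equiv.Perm.sameCycle_one.mp hab : a = b)
    · intro a b hab
      induction a using Quotient.ind
      induction b using Quotient.ind
      simp only [Quotient.lift_mk, id] at hab
      exact Quotient.sound (by simp [cycleSetoid, hab] : (cycleSetoid 1).r _ _)
    · intro a; exact ⟨⟦a⟧, rfl⟩
  rw [cycleCount, Nat.card_congr he]
  simp [Nat.card_eq_fintype_card]

variable {n : ℕ}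

/-- The relation obtained from the cycles of `ρ` by merging the classes of `a` and `b`. -/
def Rrel (ρ : Perm (Fin n)) (a b : Fin n) (x y : Fin n) : Prop :=
  ρ.SameCycle x y ∨ (ρ.SameCycle x a ∧ ρ.SameCycle b y) ∨ (ρ.SameCycle x b ∧ ρ.SameCycle a y)

lemma Rrel_equiv (ρ : Perm (Fin n)) (a b : Fin n) : Equivalence (Rrel ρ a b) := by
  constructor
  · intro x; exact Or.inl (Equiv.Perm.SameCycle.refl ρ x)
  · rintro x y (h | ⟨h1, h2⟩ | ⟨h1, h2⟩)
    · exact Or.inl h.symm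
    · exact Or.inr (Or.inr ⟨h2.symm, h1.symm⟩)
    · exact Or.inr (Or.inl ⟨h2.symm, h1.symm⟩)
  · rintro x y z (h | ⟨h1, h2⟩ | ⟨h1, h2⟩) (h' | ⟨h1', h2'⟩ | ⟨h1', h2'⟩)
    · exact Or.inl (h.trans h')
    · exact Or.inr (Or.inl ⟨h.trans h1', h2'⟩)
    · exact Or.inr (Or.inr ⟨h.trans h1', h2'⟩)
    · exact Or.inr (Or.inl ⟨h1, h2.trans h'⟩)
    · exact Or.inl (h1.trans ((h2.trans h1').symm.trans h2'))
    · exact Or.inl (h1.trans h2')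
    · exact Or.inr (Or.inr ⟨h1, h2.trans h'⟩)
    · exact Or.inl (h1.trans h2')
    · exact Or.inl (h1.trans ((h2.trans h1').symm.trans h2'))

def Rsetoid (ρ : Perm (Fin n)) (a b : Fin n) : Setoid (Fin n) := ⟨Rrel ρ a b, Rrel_equiv ρ a b⟩

lemma cc_swap_mul_le (a b : Fin n) (τ : Perm (Fin n)) :
    cycleCount (Equiv.swap a b * τ) ≤ cycleCount τ + 1 := by
  classical
  set ρ := Equiv.swap a b * τ with hρ
  have hτρ : τ = Equiv.swap a b * ρ := by rw [hρ, ← mul_assoc, Equiv.swap_mul_self, one_mul]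
  have step : ∀ x, Rrel ρ a b x (τ x) := by
    intro x
    have hx : τ x = Equiv.swap a b (ρ x) := by
      conv_lhs => rw [hτρ]
      exact Perm.mul_apply _ _ _
    have hxρ : ρ.SameCycle x (ρ x) := Equiv.Perm.sameCycle_apply_right.mpr (.refl ρ x)
    by_cases h1 : ρ x = a
    · have : τ x = b := by rw [hx, h1, Equiv.swap_apply_left]
      rw [this]
      exact Or.inr (Or.inl ⟨h1 ▸ hxρ, .refl ρ b⟩)
    · by_cases h2 : ρ x = b
      · have : τ x = a := by rw [hx, h2, Equiv.swap_apply_right]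
        rw [this]
        exact Or.inr (Or.inr ⟨h2 ▸ hxρ, .refl ρ a⟩)
      · have : τ x = ρ x := by rw [hx, Equiv.swap_apply_of_ne_of_ne h1 h2]
        rw [this]; exact Or.inl hxρ
  have hle : ∀ x y, τ.SameCycle x y → Rrel ρ a b x y := by
    intro x y h
    obtain ⟨k, rfl⟩ := sameCycle_nat_pow h
    clear h
    induction k with
    | zero => exact (Rrel_equiv ρ a b).refl x
    | succ k ih =>
        rw [pow_succ', Perm.mul_apply]
        exact (Rrel_equiv ρ a b).trans ih (step _)
  -- surjection from cycles of τ onto R-classes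
  have hsurj : Function.Surjective
      (Quotient.map' (s₁ := cycleSetoid τ) (s₂ := Rsetoid ρ a b) id (fun x y h => hle x y h)) := by
    intro q
    induction q using Quotient.ind
    rename_i z
    exact ⟨Quotient.mk _ z, rfl⟩
  have h1 : Nat.card (Quotient (Rsetoid ρ a b)) ≤ cycleCount τ :=
    Nat.card_le_card_of_surjective _ hsurj
  -- injection from cycles of ρ into R-classes plus one
  have hwd : ∀ x y, (cycleSetoid ρ).r x y →
      (if ρ.SameCycle x a then (Sum.inr () : Quotient (Rsetoid ρ a b) ⊕ Unit)
        else Sum.inl (Quotient.mk _ x)) =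
      (if ρ.SameCycle y a then (Sum.inr () : Quotient (Rsetoid ρ a b) ⊕ Unit)
        else Sum.inl (Quotient.mk _ y)) := by
    intro x y h
    by_cases hxa : ρ.SameCycle x a
    · rw [if_pos hxa, if_pos (h.symm.trans hxa)]
    · rw [if_neg hxa, if_neg (fun hya => hxa (h.trans hya))]
      exact congrArg Sum.inl (Quotient.sound (Or.inl h : Rrel ρ a b x y))
  have hinj : Function.Injective (Quotient.lift _ hwd :
      Quotient (cycleSetoid ρ) → Quotient (Rsetoid ρ a b) ⊕ Unit) := by
    intro q q'
    induction q using Quotient.ind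
    induction q' using Quotient.ind
    rename_i x y
    simp only [Quotient.lift_mk]
    by_cases hxa : ρ.SameCycle x a <;> by_cases hya : ρ.SameCycle y a <;>
      simp only [if_pos, if_neg, hxa, hya, if_true, if_false] <;> intro h
    · exact Quotient.sound (hxa.trans hya.symm)
    · simp at h
    · simp at h
    · simp only [Sum.inl.injEq] at h
      rcases Quotient.exact h with (h' | ⟨h1', h2'⟩ | ⟨h1', h2'⟩)
      · exact Quotient.sound h'
      · exact absurd h1' hxa
      · exact absurd h2'.symm hya
  have h2 := Nat.card_le_card_of_injective _ hinj
  simp only [Nat.card_sum, Nat.card_unique] at h2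
  have h3 : cycleCount ρ = Nat.card (Quotient (cycleSetoid ρ)) := rfl
  omega

lemma cc_fix_lt {σ : Perm (Fin n)} {x : Fin n} (hx : σ x ≠ x) :
    cycleCount σ + 1 ≤ cycleCount (Equiv.swap x (σ x) * σ) := by
  classical
  set σ' := Equiv.swap x (σ x) * σ with hσ'
  have hfix : σ' x = x := by
    rw [hσ', Perm.mul_apply, Equiv.swap_apply_right]
  have hle : ∀ u v, σ'.SameCycle u v → σ.SameCycle u v := by
    intro u v h
    obtain ⟨k, rfl⟩ := sameCycle_nat_pow h
    clear h
    induction k with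
    | zero => exact .refl σ u
    | succ k ih =>
        rw [pow_succ', Perm.mul_apply]
        refine ih.trans ?_
        set y := (σ' ^ k) u with hy
        have happ : σ' y = Equiv.swap x (σ x) (σ y) := by rw [hσ']; rfl
        have hyρ : σ.SameCycle y (σ y) := Equiv.Perm.sameCycle_apply_right.mpr (.refl σ y)
        by_cases h1 : σ y = x
        · have : σ' y = σ x := by rw [happ, h1, Equiv.swap_apply_left]
          rw [this]
          exact (h1 ▸ hyρ).trans (Equiv.Perm.sameCycle_apply_right.mpr (.refl σ x))
        · by_cases h2 : σ y = σ x
          · have hyx : y = x := σ.injective h2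
            have : σ' y = y := by rw [happ, h2, Equiv.swap_apply_right, hyx]
            rw [this]
          · have : σ' y = σ y := by rw [happ, Equiv.swap_apply_of_ne_of_ne h1 h2]
            rw [this]; exact hyρ
  have hsurj : Function.Surjective
      (Quotient.map' (s₁ := cycleSetoid σ') (s₂ := cycleSetoid σ) id (fun u v h => hle u v h)) := by
    intro q; induction q using Quotient.ind; rename_i z; exact ⟨Quotient.mk _ z, rfl⟩
  have hne : (Quotient.mk (cycleSetoid σ') x) ≠ (Quotient.mk (cycleSetoid σ') (σ x)) := by
    intro h
    have h' : σ'.SameCycle x (σ x) := Quotient.exact h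
    have : σ x ∈ ({x} : Set (Fin n)) :=
      sameCycle_mem_of_invariant (fun z hz => by rw [Set.mem_singleton_iff] at hz; rw [hz]; simp [hfix]) rfl h'
    exact hx this
  have heq : (Quotient.map' (s₁ := cycleSetoid σ') (s₂ := cycleSetoid σ) id (fun u v h => hle u v h))
        (Quotient.mk _ x) =
      (Quotient.map' (s₁ := cycleSetoid σ') (s₂ := cycleSetoid σ) id (fun u v h => hle u v h))
        (Quotient.mk _ (σ x)) := by
    exact Quotient.sound (Equiv.Perm.sameCycle_apply_right.mpr (.refl σ x) :
      (cycleSetoid σ).r (id x) (id (σ x)))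
  exact card_add_one_le_of_surj _ hsurj hne heq

lemma lower_bound : ∀ L : List (Perm (Fin n)), (∀ s ∈ L, s.IsSwap) →
    n ≤ L.length + cycleCount L.prod := by
  intro L
  induction L with
  | nil => intro _; simp [cc_one]
  | cons s L ih =>
      intro hsw
      obtain ⟨a, b, hab, rfl⟩ := hsw s (List.mem_cons_self (a := s) (l := L))
      have h1 := ih (fun t ht => hsw t (List.mem_cons_of_mem _ ht))
      have h2 : cycleCount L.prod ≤ cycleCount ((Equiv.swap a b :: L).prod) + 1 := by
        have := cc_swap_mul_le a b ((Equiv.swap a b :: L).prod)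
        rw [List.prod_cons, ← mul_assoc, Equiv.swap_mul_self, one_mul] at this
        rw [List.prod_cons]
        exact this
      simp only [List.length_cons]
      omega

lemma exists_swap_list_aux : ∀ k (σ : Perm (Fin n)), σ.support.card ≤ k →
    ∃ L : List (Perm (Fin n)), (∀ s ∈ L, s.IsSwap) ∧ L.prod = σ ∧
      L.length + cycleCount σ ≤ n := by
  intro k
  induction k with
  | zero =>
      intro σ hσ
      have : σ = 1 := by
        rw [← Equiv.Perm.support_eq_empty_iff, ← Finset.card_eq_zero]; omega
      subst this
      exact ⟨[], by simp, by simp, by simp [cc_one]⟩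
  | succ k ih =>
      intro σ hσ
      by_cases h1 : σ = 1
      · subst h1; exact ⟨[], by simp, by simp, by simp [cc_one]⟩
      · obtain ⟨x, hx⟩ : ∃ x, σ x ≠ x := by
          by_contra h
          push_neg at h
          exact h1 (Equiv.ext h)
        set σ' := Equiv.swap x (σ x) * σ with hσ'd
        have hσσ' : σ = Equiv.swap x (σ x) * σ' := by
          rw [hσ'd, ← mul_assoc, Equiv.swap_mul_self, one_mul]
        have hsupp : σ'.support ⊆ σ.support.erase x := by
          intro y hy
          rw [Equiv.Perm.mem_support] at hy
          rw [Finset.mem_erase, Equiv.Perm.mem_support]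
          constructor
          · rintro rfl
            exact hy (by rw [hσ'd, Perm.mul_apply, Equiv.swap_apply_right])
          · intro hyy
            apply hy
            rw [hσ'd, Perm.mul_apply, hyy]
            have hy1 : y ≠ x := by rintro rfl; exact hy (by rw [hσ'd, Perm.mul_apply, Equiv.swap_apply_right])
            have hy2 : y ≠ σ x := by
              rintro rfl
              exact hy1 (σ.injective hyy)
            rw [Equiv.swap_apply_of_ne_of_ne hy1 hy2]
        have hxmem : x ∈ σ.support := Equiv.Perm.mem_support.mpr hx
        have hcard : σ'.support.card ≤ k := by
          have := Finset.card_le_card hsupp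
          have := Finset.card_erase_lt_of_mem hxmem
          omega
        obtain ⟨L, hLsw, hLprod, hLlen⟩ := ih σ' hcard
        refine ⟨Equiv.swap x (σ x) :: L, ?_, ?_, ?_⟩
        · intro t ht
          rcases List.mem_cons.mp ht with rfl | ht
          · exact ⟨x, σ x, Ne.symm hx, rfl⟩
          · exact hLsw t ht
        · rw [List.prod_cons, hLprod, ← hσσ']
        · have hcc := cc_fix_lt hx
          rw [← hσ'd] at hcc
          simp only [List.length_cons]
          omega

lemma transLength_spec (σ : Perm (Fin n)) : ∃ L : List (Perm (Fin n)),
    L.length = transLength σ ∧ (∀ s ∈ L, s.IsSwap) ∧ L.prod = σ := by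
  obtain ⟨L, h1, h2, _⟩ := exists_swap_list_aux σ.support.card σ le_rfl
  have hne : {h | ∃ L : List (Perm (Fin n)), L.length = h ∧ (∀ s ∈ L, s.IsSwap) ∧ L.prod = σ}.Nonempty :=
    ⟨L.length, L, rfl, h1, h2⟩
  exact Nat.sInf_mem hne

lemma tl_add_cc (σ : Perm (Fin n)) : transLength σ + cycleCount σ = n := by
  obtain ⟨L₀, hlen, hsw, hprod⟩ := transLength_spec σ
  obtain ⟨L, h1, h2, h3⟩ := exists_swap_list_aux σ.support.card σ le_rfl
  have hlow : n ≤ transLength σ + cycleCount σ := by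
    have := lower_bound L₀ hsw
    rw [hprod, hlen] at this
    exact this
  have hup : transLength σ ≤ L.length := Nat.sInf_le ⟨L, rfl, h1, h2⟩
  omega

lemma tl_one : transLength (1 : Perm (Fin n)) = 0 :=
  Nat.sInf_eq_zero.mpr (Or.inl ⟨[], rfl, by simp, rfl⟩)

lemma tl_mul_le (σ ρ : Perm (Fin n)) : transLength (σ * ρ) ≤ transLength σ + transLength ρ := by
  obtain ⟨L₁, hlen₁, hsw₁, hprod₁⟩ := transLength_spec σ
  obtain ⟨L₂, hlen₂, hsw₂, hprod₂⟩ := transLength_spec ρ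
  have : transLength (σ * ρ) ≤ (L₁ ++ L₂).length :=
    Nat.sInf_le ⟨L₁ ++ L₂, rfl, by
      intro t ht; rcases List.mem_append.mp ht with h | h
      exacts [hsw₁ t h, hsw₂ t h], by rw [List.prod_append, hprod₁, hprod₂]⟩
  rw [List.length_append, hlen₁, hlen₂] at this
  exact this

section Partition

variable {j : ℕ} [NeZero j] (π : Setoid (Fin j))

def Sset (i : Fin j) : Set ℕ := {t : ℕ | 0 < t ∧ π.r i (i + (t : Fin j))}

lemma Sset_mem_j (i : Fin j) : (j : ℕ) ∈ Sset π i :=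
  ⟨NeZero.pos j, by simpa using π.iseqv.refl i⟩

lemma t0_mem (i : Fin j) : sInf (Sset π i) ∈ Sset π i := Nat.sInf_mem ⟨j, Sset_mem_j π i⟩

lemma t0_le (i : Fin j) : sInf (Sset π i) ≤ j := Nat.sInf_le (Sset_mem_j π i)

lemma nextElem_def (i : Fin j) : nextElem π i = i + ((sInf (Sset π i) : ℕ) : Fin j) := rfl

lemma t0_min (i : Fin j) {u : ℕ} (h0 : 0 < u) (hu : u < sInf (Sset π i)) :
    ¬ π.r i (i + (u : Fin j)) := fun h =>
  absurd (Nat.sInf_le (show u ∈ Sset π i from ⟨h0, h⟩)) (by omega)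

lemma add_sub_self' (x y : Fin j) : x + (((y - x).val : ℕ) : Fin j) = y := by
  rw [Fin.cast_val_eq_self, add_comm, sub_add_cancel]

lemma fin_add_val (x : Fin j) (t : ℕ) (ht : t ≤ j) :
    ((x + (t : Fin j)).val = x.val + t ∧ x.val + t < j) ∨
      ((x + (t : Fin j)).val + j = x.val + t ∧ j ≤ x.val + t) := by
  have hx := x.isLt
  have h : (x + (t : Fin j)).val = (x.val + t % j) % j := by
    rw [Fin.add_def, Fin.val_natCast]
  rcases eq_or_lt_of_le ht with rfl | htj
  · rw [Nat.mod_self, add_zero, Nat.mod_eq_of_lt hx] at h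
    right; omega
  · rw [Nat.mod_eq_of_lt htj] at h
    by_cases h2 : x.val + t < j
    · rw [Nat.mod_eq_of_lt h2] at h; left; omega
    · rw [Nat.mod_eq_sub_mod (le_of_not_gt h2), Nat.mod_eq_of_lt (by omega)] at h
      right; omega

lemma nextElem_surj : Function.Surjective (nextElem π) := by
  intro z
  have hPj : (j : ℕ) ∈ {t : ℕ | 0 < t ∧ π.r (z - (t : Fin j)) z} :=
    ⟨NeZero.pos j, by simpa using π.iseqv.refl z⟩
  obtain ⟨s, hsdef⟩ : ∃ s, sInf {t : ℕ | 0 < t ∧ π.r (z - (t : Fin j)) z} = s := ⟨_, rfl⟩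
  have hs : s ∈ {t : ℕ | 0 < t ∧ π.r (z - (t : Fin j)) z} := hsdef ▸ Nat.sInf_mem ⟨j, hPj⟩
  have hsmin : ∀ u ∈ {t : ℕ | 0 < t ∧ π.r (z - (t : Fin j)) z}, s ≤ u :=
    fun u hu => hsdef ▸ Nat.sInf_le hu
  set z' := z - (s : Fin j) with hz'
  have hz's : z' + (s : Fin j) = z := by rw [hz', sub_add_cancel]
  refine ⟨z', ?_⟩
  have hmemS : s ∈ Sset π z' := ⟨hs.1, by rw [hz's]; exact hs.2⟩
  obtain ⟨t0, ht0⟩ : ∃ t0, sInf (Sset π z') = t0 := ⟨_, rfl⟩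
  have hinfle : t0 ≤ s := ht0 ▸ Nat.sInf_le hmemS
  have hmem' : t0 ∈ Sset π z' := ht0 ▸ Nat.sInf_mem ⟨s, hmemS⟩
  have heq : t0 = s := by
    by_contra hne
    have hlt : t0 < s := lt_of_le_of_ne hinfle hne
    have hu : z' + ((t0 : ℕ) : Fin j) = z - (((s - t0 : ℕ) : ℕ) : Fin j) := by
      rw [Nat.cast_sub (le_of_lt hlt), hz']; ring
    have humem : (s - t0 : ℕ) ∈ {t : ℕ | 0 < t ∧ π.r (z - (t : Fin j)) z} := by
      refine ⟨by omega, ?_⟩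
      have h1 : π.r (z' + ((t0 : ℕ) : Fin j)) z :=
        π.iseqv.trans (π.iseqv.symm hmem'.2) hs.2
      rwa [hu] at h1
    have h01 : 0 < t0 := hmem'.1
    have hss : s ≤ s - t0 := hsmin _ humem
    omega
  rw [nextElem_def, ht0, heq, hz's]

lemma reach (σ : Equiv.Perm (Fin j)) (hσ : ∀ i, σ i = nextElem π i) :
    ∀ t : ℕ, ∀ x : Fin j, π.r x (x + (t : Fin j)) → σ.SameCycle x (x + (t : Fin j)) := by
  intro t
  induction t using Nat.strong_induction_on with
  | _ t ih =>
    intro x hx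
    rcases Nat.eq_zero_or_pos t with rfl | ht
    · simpa using Equiv.Perm.SameCycle.refl σ x
    · have htS : t ∈ Sset π x := ⟨ht, hx⟩
      obtain ⟨t0, ht0⟩ : ∃ t0, sInf (Sset π x) = t0 := ⟨_, rfl⟩
      have hmem : t0 ∈ Sset π x := ht0 ▸ t0_mem π x
      have hle : t0 ≤ t := ht0 ▸ Nat.sInf_le htS
      have hσx : σ x = x + ((t0 : ℕ) : Fin j) := by rw [hσ x, nextElem_def, ht0]
      have hsc1 : σ.SameCycle x (x + ((t0 : ℕ) : Fin j)) :=
        hσx ▸ Equiv.Perm.sameCycle_apply_right.mpr (.refl σ x)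
      rcases eq_or_lt_of_le hle with heq | hlt
      · rw [← heq]; exact hsc1
      · have hcast : (x + ((t0 : ℕ) : Fin j)) + ((t - t0 : ℕ) : Fin j) = x + (t : Fin j) := by
          rw [Nat.cast_sub hle]; ring
        have hr : π.r (x + ((t0 : ℕ) : Fin j)) ((x + ((t0 : ℕ) : Fin j)) + ((t - t0 : ℕ) : Fin j)) := by
          rw [hcast]; exact π.iseqv.trans (π.iseqv.symm hmem.2) hx
        have h01 : 0 < t0 := hmem.1
        have hrec := ih (t - t0) (by omega) (x + ((t0 : ℕ) : Fin j)) hr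
        rw [hcast] at hrec
        exact hsc1.trans hrec

lemma sc_iff (σ : Equiv.Perm (Fin j)) (hσ : ∀ i, σ i = nextElem π i) (x y : Fin j) :
    σ.SameCycle x y ↔ π.r x y := by
  constructor
  · intro h
    refine sameCycle_mem_of_invariant (S := {z | π.r x z}) ?_ (π.iseqv.refl x) h
    intro z hz
    have hz2 : σ z = z + ((sInf (Sset π z) : ℕ) : Fin j) := hσ z
    rw [Set.mem_setOf_eq, hz2]
    exact π.iseqv.trans hz (t0_mem π z).2
  · intro h
    have := reach π σ hσ ((y - x).val) x (by rw [add_sub_self']; exact h)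
    rwa [add_sub_self'] at this

end Partition

section Rotate

lemma fin_sub_val_of_le {j : ℕ} [NeZero j] {x y : Fin j} (h : x.val ≤ y.val) :
    (y - x).val = y.val - x.val := by
  have hx := x.isLt
  have hy := y.isLt
  have hval : (y - x).val = (j - x.val + y.val) % j := by rw [Fin.sub_def]
  have h1 : j ≤ j - x.val + y.val := by omega
  rw [Nat.mod_eq_sub_mod h1, Nat.mod_eq_of_lt (by omega)] at hval
  omega

lemma rot_pow (m : ℕ) : ∀ (k : ℕ) (x : Fin (m+1)),
    ((finRotate (m+1)) ^ k) x = x + (k : Fin (m+1)) := by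
  intro k
  induction k with
  | zero => intro x; simp
  | succ k ih =>
      intro x
      rw [pow_succ, Perm.mul_apply, ih, finRotate_succ_apply]
      push_cast
      ring

lemma cc_finRotate (m : ℕ) : cycleCount (finRotate (m+1)) = 1 := by
  have hsc : ∀ x y : Fin (m+1), (finRotate (m+1)).SameCycle x y := by
    intro x y
    refine ⟨(((y - x).val : ℕ) : ℤ), ?_⟩
    rw [zpow_natCast, rot_pow]
    exact add_sub_self' x y
  rw [cycleCount, Nat.card_eq_one_iff_unique]
  constructor
  · constructor
    intro a b
    induction a using Quotient.ind
    induction b using Quotient.ind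
    exact Quotient.sound (hsc _ _)
  · exact ⟨Quotient.mk _ 0⟩

end Rotate

section Kreweras

variable {m : ℕ} (π : Setoid (Fin (m+1)))

lemma key_claim (hπ : NonCrossing π) (σ : Equiv.Perm (Fin (m+1)))
    (hσ : ∀ i, σ i = nextElem π i) (p : Fin (m+1)) :
    (∀ y, π.r (p+1) y → p+1 ≤ y) ∨
      (∀ y, (σ⁻¹ * finRotate (m+1)).SameCycle p y → y ≤ p) := by
  classical
  set τ := σ⁻¹ * finRotate (m+1) with hτ
  have hτap : ∀ q, τ q = σ⁻¹ (q + 1) := fun q => by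
    rw [hτ, Perm.mul_apply, finRotate_succ_apply]
  have hself : ∀ v, π.r v (σ v) := fun v => by
    rw [hσ v, nextElem_def]; exact (t0_mem π v).2
  by_cases hc : ∀ y, π.r (p+1) y → p+1 ≤ y
  · exact Or.inl hc
  right
  push_neg at hc
  obtain ⟨a₀, ha₀r, ha₀lt'⟩ := hc
  have ha₀lt : a₀ < p + 1 := ha₀lt'
  obtain ⟨i, hi⟩ : ∃ i', p + 1 = i' := ⟨_, rfl⟩
  rw [hi] at ha₀r ha₀lt
  have hi0 : i ≠ 0 := by
    intro h
    have := ha₀lt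
    rw [h, Fin.lt_def, Fin.val_zero] at this
    omega
  have hi0v : i.val ≠ 0 := fun h => hi0 (Fin.ext (by simpa using h))
  have hpi : p.val + 1 = i.val := by
    have hcast1 : ((1 : ℕ) : Fin (m+1)) = 1 := Nat.cast_one
    have hple := p.isLt
    rcases fin_add_val p 1 (by omega) with ⟨h1, h2⟩ | ⟨h1, h2⟩ <;>
      rw [hcast1, hi] at h1 <;> omega
  obtain ⟨w, hw⟩ : ∃ w', σ⁻¹ i = w' := ⟨_, rfl⟩
  have hwn : σ w = i := by rw [← hw]; exact σ.apply_symm_apply i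
  obtain ⟨t, htdef⟩ : ∃ t, sInf (Sset π w) = t := ⟨_, rfl⟩
  have hmem : t ∈ Sset π w := htdef ▸ t0_mem π w
  have h0t : 0 < t := hmem.1
  have ht_le : t ≤ m + 1 := htdef ▸ t0_le π w
  have hσw : σ w = w + ((t : ℕ) : Fin (m+1)) := by rw [hσ w, nextElem_def, htdef]
  have hwt : w + ((t : ℕ) : Fin (m+1)) = i := by rw [← hσw]; exact hwn
  have hwi_r : π.r w i := by rw [← hwt]; exact hmem.2
  have hminw : ∀ u : ℕ, 0 < u → u < t → ¬ π.r w (w + (u : Fin (m+1))) := by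
    intro u h1 h2
    exact t0_min π w h1 (htdef ▸ h2)
  have hav : a₀.val < i.val := ha₀lt
  have hwival : w.val < i.val := by
    by_contra hge
    push_neg at hge
    have hu_add : w + (((a₀ - w).val : ℕ) : Fin (m+1)) = a₀ := add_sub_self' w a₀
    have hulw : (a₀ - w).val < m + 1 := (a₀ - w).isLt
    have hwa : π.r w a₀ := π.iseqv.trans hwi_r ha₀r
    rcases Nat.eq_zero_or_pos (a₀ - w).val with hu0 | hupos
    · have : a₀ - w = 0 := Fin.ext (by simpa using hu0)
      have : a₀ = w := sub_eq_zero.mp this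
      rw [this] at hav
      omega
    · have hut : t ≤ (a₀ - w).val := by
        by_contra hut
        push_neg at hut
        exact hminw _ hupos hut (by rw [hu_add]; exact hwa)
      have hWT := fin_add_val w t ht_le
      rw [hwt] at hWT
      have hUA := fin_add_val w (a₀ - w).val (le_of_lt hulw)
      rw [hu_add] at hUA
      rcases hWT with ⟨h1, h2⟩ | ⟨h1, h2⟩ <;> rcases hUA with ⟨g1, g2⟩ | ⟨g1, g2⟩ <;> omega
  have htval : i.val = w.val + t := by
    have hWT := fin_add_val w t ht_le
    rw [hwt] at hWT
    rcases hWT with ⟨h1, _⟩ | ⟨h1, h2⟩ <;> omega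
  have hbet : ∀ z : Fin (m+1), π.r i z → ¬ (w.val < z.val ∧ z.val < i.val) := by
    rintro z hz ⟨h1, h2⟩
    have hu_add : w + (((z - w).val : ℕ) : Fin (m+1)) = z := add_sub_self' w z
    have huval : (z - w).val = z.val - w.val := fin_sub_val_of_le (le_of_lt h1)
    have hwz : π.r w z := π.iseqv.trans hwi_r hz
    refine hminw (z - w).val (by omega) (by omega) ?_
    rw [hu_add]
    exact hwz
  have hblock : ∀ z : Fin (m+1), w.val < z.val → z.val < i.val →
      ∀ v : Fin (m+1), π.r z v → w.val < v.val ∧ v.val < i.val := by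
    intro z hz1 hz2 v hzv
    have hzi : ¬ π.r i z := fun h => hbet z h ⟨hz1, hz2⟩
    have hzw : ¬ π.r w z := fun h => hzi (π.iseqv.trans (π.iseqv.symm hwi_r) h)
    constructor
    · rcases lt_trichotomy v.val w.val with h | h | h
      · exfalso
        refine hπ ⟨v, w, z, i, ?_, ?_, ?_, π.iseqv.symm hzv, hwi_r, ?_⟩
        · exact h
        · exact hz1
        · exact hz2
        · intro hvw
          exact hzw (π.iseqv.symm (π.iseqv.trans hzv hvw))
      · exfalso
        have : v = w := Fin.ext h
        rw [this] at hzv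
        exact hzw (π.iseqv.symm hzv)
      · exact h
    · rcases lt_trichotomy v.val i.val with h | h | h
      · exact h
      · exfalso
        have : v = i := Fin.ext h
        rw [this] at hzv
        exact hzi (π.iseqv.symm hzv)
      · exfalso
        refine hπ ⟨w, z, i, v, ?_, ?_, ?_, hwi_r, hzv, ?_⟩
        · exact hz1
        · exact hz2
        · exact h
        · exact hzw
  have hm1 : 1 ≤ m := by
    have := i.isLt
    omega
  have hT : ∀ y : Fin (m+1), w.val ≤ y.val ∧ y.val < i.val →
      w.val ≤ (τ y).val ∧ (τ y).val < i.val := by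
    rintro y ⟨hy1, hy2⟩
    have hi_lt := i.isLt
    have h1v : (1 : Fin (m+1)).val = 1 % (m+1) := Fin.val_one' (m+1)
    have hzval : (y + 1).val = y.val + 1 := by
      rw [Fin.add_def, h1v]
      have e1 : 1 % (m + 1) = 1 := Nat.mod_eq_of_lt (by omega)
      rw [e1]
      exact Nat.mod_eq_of_lt (by omega)
    have hτy : τ y = σ⁻¹ (y + 1) := hτap y
    have hvz : π.r (σ⁻¹ (y + 1)) (y + 1) := by
      have := hself (σ⁻¹ (y + 1))
      rwa [show σ (σ⁻¹ (y + 1)) = y + 1 from σ.apply_symm_apply _] at this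
    by_cases hzi : y + 1 = i
    · rw [hτy, hzi, hw]
      exact ⟨le_rfl, hwival⟩
    · have hz2 : (y + 1).val < i.val := by
        have : (y + 1).val ≠ i.val := fun h => hzi (Fin.ext h)
        omega
      have hz1 : w.val < (y + 1).val := by omega
      obtain ⟨hh1, hh2⟩ := hblock (y + 1) hz1 hz2 (σ⁻¹ (y + 1)) (π.iseqv.symm hvz)
      rw [hτy]
      exact ⟨le_of_lt hh1, hh2⟩
  intro y hy
  have hyT : y ∈ {v : Fin (m+1) | w.val ≤ v.val ∧ v.val < i.val} := by
    refine sameCycle_mem_of_invariant (fun v hv => hT v hv) ?_ hy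
    exact ⟨by omega, by omega⟩
  have := hyT.2
  rw [Fin.le_def]
  omega

lemma kreweras (hπ : NonCrossing π) (σ : Equiv.Perm (Fin (m+1)))
    (hσ : ∀ i, σ i = nextElem π i) :
    m + 2 ≤ cycleCount σ + cycleCount (σ⁻¹ * finRotate (m+1)) := by
  classical
  set τ := σ⁻¹ * finRotate (m+1) with hτ
  have hKEY := key_claim π hπ σ hσ
  rw [← hτ] at hKEY
  have h0min : ∀ y, π.r (0 : Fin (m+1)) y → (0 : Fin (m+1)) ≤ y := fun y _ => Fin.zero_le y
  set G : Fin (m+1) → Quotient (cycleSetoid σ) ⊕ Quotient (cycleSetoid τ) := fun p =>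
    if (∀ y, π.r (p+1) y → p+1 ≤ y) then Sum.inl (Quotient.mk _ (p+1))
    else Sum.inr (Quotient.mk _ p) with hG
  have hGinj : Function.Injective G := by
    intro p q hpq
    simp only [hG] at hpq
    by_cases hp : (∀ y, π.r (p+1) y → p+1 ≤ y)
    · by_cases hq : (∀ y, π.r (q+1) y → q+1 ≤ y)
      · rw [if_pos hp, if_pos hq] at hpq
        have hsc : σ.SameCycle (p+1) (q+1) := Quotient.exact (Sum.inl.inj hpq)
        have hr : π.r (p+1) (q+1) := (sc_iff π σ hσ _ _).mp hsc
        have h1 := hp _ hr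
        have h2 := hq _ (π.iseqv.symm hr)
        exact add_right_cancel (le_antisymm h1 h2)
      · rw [if_pos hp, if_neg hq] at hpq
        exact absurd hpq (by simp)
    · by_cases hq : (∀ y, π.r (q+1) y → q+1 ≤ y)
      · rw [if_neg hp, if_pos hq] at hpq
        exact absurd hpq (by simp)
      · rw [if_neg hp, if_neg hq] at hpq
        have hsc : τ.SameCycle p q := Quotient.exact (Sum.inr.inj hpq)
        have max_p := (hKEY p).resolve_left hp
        have max_q := (hKEY q).resolve_left hq
        exact le_antisymm (max_q p hsc.symm) (max_p q hsc)
  have hGmiss : ∀ p, G p ≠ Sum.inr (Quotient.mk _ (Fin.last m)) := by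
    intro p hp
    simp only [hG] at hp
    by_cases hc : (∀ y, π.r (p+1) y → p+1 ≤ y)
    · rw [if_pos hc] at hp
      exact absurd hp (by simp)
    · rw [if_neg hc] at hp
      have hsc : τ.SameCycle p (Fin.last m) := Quotient.exact (Sum.inr.inj hp)
      have hmax := (hKEY p).resolve_left hc
      have h2 : p = Fin.last m := le_antisymm (Fin.le_last p) (hmax _ hsc)
      exact hc (by rw [h2, Fin.last_add_one]; exact h0min)
  have hinj2 : Function.Injective (fun x : Fin (m+1) ⊕ Unit =>
      Sum.elim G (fun _ => Sum.inr (Quotient.mk _ (Fin.last m))) x) := by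
    rintro (p | u) (q | v) h <;> simp only [Sum.elim_inl, Sum.elim_inr] at h
    · exact congrArg Sum.inl (hGinj h)
    · exact absurd h (hGmiss p)
    · exact absurd h.symm (hGmiss q)
    · rfl
  have hcard := Nat.card_le_card_of_injective _ hinj2
  simp only [Nat.card_sum] at hcard
  have h3 : Nat.card Unit = 1 := Nat.card_unique
  have h4 : Nat.card (Fin (m+1)) = m + 1 := by simp [Nat.card_eq_fintype_card]
  have e1 : cycleCount σ = Nat.card (Quotient (cycleSetoid σ)) := rfl
  have e2 : cycleCount τ = Nat.card (Quotient (cycleSetoid τ)) := rfl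
  omega

end Kreweras

/-- for a non-crossing partition `π` of `{1,…,j}`, the map sending
`i` to the next element of its block in the cyclic order `(1,2,…,j)` is a
bijection; any permutation `σ_π` realizing it has orbits exactly the blocks of
`π` and lies in the interval `[id, (1 2 … j)]` of the absolute order. -/
theorem sigmaPi_mem_interval (j : ℕ) [NeZero j] (π : Setoid (Fin j)) (hπ : NonCrossing π) :
    Function.Bijective (nextElem π) ∧
    ∀ σ : Equiv.Perm (Fin j), (∀ i, σ i = nextElem π i) →
      (∀ x y, σ.SameCycle x y ↔ π.r x y) ∧ absLe 1 σ ∧ absLe σ (finRotate j) := by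
  obtain ⟨m, rfl⟩ : ∃ m, j = m + 1 := ⟨j - 1, by have := NeZero.pos j; omega⟩
  constructor
  · exact Finite.surjective_iff_bijective.mp (nextElem_surj π)
  · intro σ hσ
    refine ⟨sc_iff π σ hσ, ?_, ?_⟩
    · show transLength σ = transLength 1 + transLength (1⁻¹ * σ)
      rw [tl_one, inv_one, one_mul, zero_add]
    · show transLength (finRotate (m+1)) = transLength σ + transLength (σ⁻¹ * finRotate (m+1))
      have h1 := tl_add_cc (finRotate (m+1))
      have h2 := tl_add_cc σ
      have h3 := tl_add_cc (σ⁻¹ * finRotate (m+1))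
      have h4 := kreweras π hπ σ hσ
      have h5 := cc_finRotate m
      have h6 : transLength (finRotate (m+1)) ≤
          transLength σ + transLength (σ⁻¹ * finRotate (m+1)) := by
        have := tl_mul_le σ (σ⁻¹ * finRotate (m+1))
        rwa [mul_inv_cancel_left] at this
      omega
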